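/- The map η : L → lim← F_n defined by η(p) = (Φ̃_n(p))_{n≥0} takes values in the inverse limit lim← F_n and is a homeomorphism of the Laakso space L onto lim← F_n. In particular, L is a compact Hausdorff space. -/

import Mathlib

open MeasureTheory Set Filter

/-- The value `w(m_1, …, m_l)` of a tuple, encoded as a list `[m_1, …, m_l]`
(so list index `i` corresponds to `m_{i+1}`, and `J i` to `j_{i+1}`):
`w = Σ_{i=1}^{l} m_i ∏_{h=1}^{i} j_h⁻¹`. -/
noncomputable def wLoc (J : ℕ → ℕ) (m : List ℕ) : ℝ :=
  ∑ i ∈ Finset.range m.length,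
    (m.getD i 0 : ℝ) * ∏ h ∈ Finset.range (i + 1), ((J h : ℝ))⁻¹

/-- A tuple `(m_1, …, m_l)` (encoded as a list) is admissible if `l ≥ 1`,
`0 ≤ m_i < j_i` for all `1 ≤ i ≤ l` and `0 < m_l`. -/
def Admissible (J : ℕ → ℕ) (m : List ℕ) : Prop :=
  m ≠ [] ∧ (∀ i, i < m.length → m.getD i 0 < J i) ∧ 0 < m.getD (m.length - 1) 0

/-- `x` is a wormhole location of level `l`. -/
def IsWormhole (J : ℕ → ℕ) (l : ℕ) (x : ℝ) : Prop :=
  ∃ m : List ℕ, m.length = l ∧ Admissible J m ∧ x = wLoc J m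

/-- The unit interval `[0,1]`. -/
abbrev I01 : Type := Set.Icc (0 : ℝ) 1

/-- The Cantor space `K = {0,1}^{ℕ≥1}`; coordinate `i : ℕ` encodes `w_{i+1}`. -/
abbrev Kspace : Type := ℕ → Bool

/-- The relation `R` on `[0,1] × K`: `(x,w) R (x',w')` iff `x = x'`, `x` is a wormhole
location of some level `l ≥ 1`, and `w, w'` differ in coordinate `l` and agree in all
other coordinates (coordinate `l` of the sequence is encoded as index `l - 1`). -/
def laaksoRel (J : ℕ → ℕ) (p q : I01 × Kspace) : Prop :=
  p.1 = q.1 ∧ ∃ l : ℕ, IsWormhole J (l + 1) (p.1 : ℝ) ∧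
    p.2 l ≠ q.2 l ∧ ∀ i, i ≠ l → p.2 i = q.2 i

/-- The Laakso space: the quotient of `[0,1] × K` by the equivalence relation
generated by `laaksoRel`. -/
def Laakso (J : ℕ → ℕ) : Type := Quot (laaksoRel J)

instance (J : ℕ → ℕ) : TopologicalSpace (Laakso J) :=
  inferInstanceAs (TopologicalSpace (Quot (laaksoRel J)))

/-- The relation defining the approximating quantum graph `F_n` on `[0,1] × {0,1}^n`. -/
def graphRel (J : ℕ → ℕ) (n : ℕ) (p q : I01 × (Fin n → Bool)) : Prop :=
  p.1 = q.1 ∧ ∃ l : Fin n, IsWormhole J (l.1 + 1) (p.1 : ℝ) ∧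
    p.2 l ≠ q.2 l ∧ ∀ i, i ≠ l → p.2 i = q.2 i

/-- The approximating quantum graph `F_n`. -/
def FGraph (J : ℕ → ℕ) (n : ℕ) : Type := Quot (graphRel J n)

instance (J : ℕ → ℕ) (n : ℕ) : TopologicalSpace (FGraph J n) :=
  inferInstanceAs (TopologicalSpace (Quot (graphRel J n)))

/-- The projection `[0,1] × {0,1}^{n+1} → [0,1] × {0,1}^n` forgetting the last coordinate. -/
def projMap (n : ℕ) : I01 × (Fin (n + 1) → Bool) → I01 × (Fin n → Bool) :=
  fun p => (p.1, fun i => p.2 i.castSucc)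

/-- The truncation `[0,1] × K → [0,1] × {0,1}^n`, `(x,w) ↦ (x, w_1, …, w_n)`. -/
def truncMap (n : ℕ) : I01 × Kspace → I01 × (Fin n → Bool) :=
  fun p => (p.1, fun i => p.2 i)

/-- Lebesgue measure on `[0,1]`. -/
noncomputable def lebI : Measure I01 := Measure.comap Subtype.val volume

/- ### Auxiliary lemmas -/

def Nval (J : ℕ → ℕ) (m : List ℕ) : ℕ :=
  ∑ i ∈ Finset.range m.length, m.getD i 0 * ∏ h ∈ Finset.Ico (i + 1) m.length, J h

lemma wLoc_mul (J : ℕ → ℕ) (hJ2 : ∀ i, 2 ≤ J i) (m : List ℕ) :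
    wLoc J m * (∏ h ∈ Finset.range m.length, (J h : ℝ)) = (Nval J m : ℝ) := by
  unfold wLoc Nval
  push_cast
  rw [Finset.sum_mul]
  refine Finset.sum_congr rfl fun i hi => ?_
  rw [Finset.mem_range] at hi
  rw [← Finset.prod_range_mul_prod_Ico (fun h => (J h : ℝ)) (Nat.succ_le_of_lt hi)]
  have hne : (∏ h ∈ Finset.range (i + 1), (J h : ℝ)) ≠ 0 := by
    apply Finset.prod_ne_zero_iff.2
    intro h _
    have := hJ2 h
    positivity
  rw [Finset.prod_inv_distrib]
  field_simp

lemma not_dvd_Nval (J : ℕ → ℕ) (m : List ℕ) (hm : Admissible J m) :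
    ¬ J (m.length - 1) ∣ Nval J m := by
  obtain ⟨hne, hlt, hpos⟩ := hm
  set l := m.length with hl
  have hl1 : 1 ≤ l := by
    rw [hl]
    exact List.length_pos_iff.2 hne
  obtain ⟨k, hk⟩ : ∃ k, l = k + 1 := ⟨l - 1, (Nat.succ_pred_eq_of_pos hl1).symm⟩
  have hk1 : l - 1 = k := by omega
  intro hdvd
  have hNval : Nval J m = (∑ i ∈ Finset.range k, m.getD i 0 * ∏ h ∈ Finset.Ico (i + 1) l, J h)
      + m.getD k 0 * ∏ h ∈ Finset.Ico (k + 1) l, J h := by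
    unfold Nval
    rw [← hl, hk, Finset.sum_range_succ]
  have hlast : (∏ h ∈ Finset.Ico (k + 1) l, J h) = 1 := by
    rw [hk]; simp
  have hdvd_sum : J k ∣ ∑ i ∈ Finset.range k, m.getD i 0 * ∏ h ∈ Finset.Ico (i + 1) l, J h := by
    apply Finset.dvd_sum
    intro i hi
    rw [Finset.mem_range] at hi
    exact Dvd.dvd.mul_left (Finset.dvd_prod_of_mem J (by simp [Finset.mem_Ico]; omega)) _
  have hdvd_mk : J k ∣ m.getD k 0 := by
    have : J k ∣ Nval J m - ∑ i ∈ Finset.range k, m.getD i 0 * ∏ h ∈ Finset.Ico (i + 1) l, J h := by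
      rw [hk1] at hdvd
      exact Nat.dvd_sub hdvd hdvd_sum
    rwa [hNval, hlast, Nat.add_sub_cancel_left, mul_one] at this
  have h1 : 0 < m.getD k 0 := by rwa [hk1] at hpos
  have h2 : m.getD k 0 < J k := hlt k (by omega)
  exact absurd (Nat.le_of_dvd h1 hdvd_mk) (not_le.2 h2)

lemma wormhole_level_unique (J : ℕ → ℕ) (hJ2 : ∀ i, 2 ≤ J i) {l l' : ℕ} {x : ℝ}
    (h : IsWormhole J l x) (h' : IsWormhole J l' x) : l = l' := by
  -- helper: l < l' impossible
  have key : ∀ l l' : ℕ, l < l' → ¬ (IsWormhole J l x ∧ IsWormhole J l' x) := by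
    rintro a b hab ⟨⟨m, hml, hma, hmx⟩, ⟨m', hml', hma', hmx'⟩⟩
    have hPpos : ∀ s : Finset ℕ, (0:ℝ) < ∏ h ∈ s, (J h : ℝ) := by
      intro s
      apply Finset.prod_pos
      intro h _
      have := hJ2 h
      positivity
    have e1 := wLoc_mul J hJ2 m
    have e2 := wLoc_mul J hJ2 m'
    rw [← hmx] at e1
    rw [← hmx'] at e2
    -- x = Nval m / P a = Nval m' / P b
    have hPb : (∏ h ∈ Finset.range m'.length, (J h : ℝ))
        = (∏ h ∈ Finset.range m.length, (J h : ℝ)) * ∏ h ∈ Finset.Ico a b, (J h : ℝ) := by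
      rw [hml, hml', Finset.prod_range_mul_prod_Ico _ (le_of_lt hab)]
    have hcast : ((Nval J m * ∏ h ∈ Finset.Ico a b, J h : ℕ) : ℝ) = (Nval J m' : ℝ) := by
      push_cast
      rw [← e1, ← e2, hPb]
      ring
    have heq : Nval J m * ∏ h ∈ Finset.Ico a b, J h = Nval J m' := Nat.cast_injective hcast
    have hbdvd : J (b - 1) ∣ Nval J m' := by
      rw [← heq]
      apply Dvd.dvd.mul_left
      apply Finset.dvd_prod_of_mem
      simp [Finset.mem_Ico]
      omega
    rw [← hml'] at hbdvd
    exact not_dvd_Nval J m' hma' hbdvd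
  rcases lt_trichotomy l l' with hc | hc | hc
  · exact absurd ⟨h, h'⟩ (key l l' hc)
  · exact hc
  · exact absurd ⟨h', h⟩ (key l' l hc)

lemma wormhole_finite (J : ℕ → ℕ) (j : ℕ) (hJ : ∀ i, J i = j ∨ J i = j + 1) (l : ℕ) :
    Set.Finite {x : ℝ | IsWormhole J l x} := by
  have hsub : {x : ℝ | IsWormhole J l x} ⊆
      Set.range (fun f : Fin l → Fin (j + 2) => wLoc J (List.ofFn fun i => (f i : ℕ))) := by
    rintro x ⟨m, hml, ⟨_, hlt, _⟩, hmx⟩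
    have hbd : ∀ i, i < m.length → m.getD i 0 < j + 2 := by
      intro i hi
      have := hlt i hi
      rcases hJ i with h | h <;> omega
    refine ⟨fun i => ⟨m.getD i 0, hbd i (by rw [hml]; exact i.2)⟩, ?_⟩
    simp only
    rw [hmx]
    unfold wLoc
    rw [List.length_ofFn, hml]
    refine Finset.sum_congr rfl fun i hi => ?_
    rw [Finset.mem_range] at hi
    congr 1
    have : (List.ofFn fun i : Fin l => m.getD i 0).getD i 0 = m.getD i 0 := by
      rw [List.getD_eq_getElem?_getD, List.getElem?_ofFn]
      simp [List.ofFnNthVal, hi]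
    rw [this]
  exact Set.Finite.subset (Set.finite_range _) hsub


section T2Quot
variable {X : Type*} [TopologicalSpace X] [CompactSpace X] [T2Space X]

lemma t2_of_quot (r S : X → X → Prop)
    (hiff : ∀ p q, Quot.mk r p = Quot.mk r q ↔ S p q)
    (hclosed : IsClosed {z : X × X | S z.1 z.2}) : T2Space (Quot r) := by
  constructor
  intro u v huv
  obtain ⟨x, rfl⟩ := Quot.exists_rep u
  obtain ⟨y, rfl⟩ := Quot.exists_rep v
  have hclass : ∀ w : X, IsClosed {z : X | S w z} := fun w =>
    hclosed.preimage (Continuous.prodMk_right w)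
  have hdisj : Disjoint {z : X | S x z} {z : X | S y z} := by
    rw [Set.disjoint_left]
    intro z hz hz'
    exact huv (((hiff x z).2 hz).trans ((hiff y z).2 hz').symm)
  obtain ⟨U, V, hUo, hVo, hxU, hyV, hUV⟩ :=
    SeparatedNhds.of_isCompact_isClosed ((hclass x).isCompact) (hclass y) hdisj
  have hsat : ∀ C : Set X, IsClosed C → IsClosed (Quot.mk r '' C) := by
    intro C hC
    rw [← isQuotientMap_quot_mk.isClosed_preimage]
    have heq : Quot.mk r ⁻¹' (Quot.mk r '' C) =
        Prod.fst '' ({z : X × X | S z.1 z.2} ∩ Prod.snd ⁻¹' C) := by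
      ext z
      simp only [Set.mem_preimage, Set.mem_image, Set.mem_inter_iff, Set.mem_setOf_eq,
        Prod.exists]
      constructor
      · rintro ⟨w, hwC, hw⟩
        exact ⟨z, w, ⟨(hiff z w).1 hw.symm, hwC⟩, rfl⟩
      · rintro ⟨a, b, ⟨hS, hbC⟩, rfl⟩
        exact ⟨b, hbC, ((hiff a b).2 hS).symm⟩
    rw [heq]
    exact isClosedMap_fst_of_compactSpace _ (hclosed.inter (hC.preimage continuous_snd))
  refine ⟨(Quot.mk r '' Uᶜ)ᶜ, (Quot.mk r '' Vᶜ)ᶜ, (hsat _ hUo.isClosed_compl).isOpen_compl,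
    (hsat _ hVo.isClosed_compl).isOpen_compl, ?_, ?_, ?_⟩
  · rintro ⟨w, hwU, hw⟩
    exact hwU (hxU ((hiff x w).1 hw.symm))
  · rintro ⟨w, hwV, hw⟩
    exact hwV (hyV ((hiff y w).1 hw.symm))
  · rw [Set.disjoint_left]
    rintro c hcA hcB
    obtain ⟨z, rfl⟩ := Quot.exists_rep c
    have hzU : z ∈ U := by
      by_contra hz
      exact hcA ⟨z, hz, rfl⟩
    have hzV : z ∈ V := by
      by_contra hz
      exact hcB ⟨z, hz, rfl⟩
    exact Set.disjoint_left.1 hUV hzU hzV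
end T2Quot


def Srel (J : ℕ → ℕ) (n : ℕ) (p q : I01 × (Fin n → Bool)) : Prop :=
  p.1 = q.1 ∧ ∀ l : Fin n, p.2 l ≠ q.2 l → IsWormhole J (l.1 + 1) (p.1 : ℝ)

lemma Srel.refl (J : ℕ → ℕ) (n : ℕ) (p : I01 × (Fin n → Bool)) : Srel J n p p :=
  ⟨rfl, fun l h => absurd rfl h⟩

lemma Srel.symm {J : ℕ → ℕ} {n : ℕ} {p q : I01 × (Fin n → Bool)}
    (h : Srel J n p q) : Srel J n q p := by
  obtain ⟨h1, h2⟩ := h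
  exact ⟨h1.symm, fun l hl => h1 ▸ h2 l (Ne.symm hl)⟩

lemma Srel.trans {J : ℕ → ℕ} {n : ℕ} {p q r : I01 × (Fin n → Bool)}
    (h : Srel J n p q) (h' : Srel J n q r) : Srel J n p r := by
  obtain ⟨h1, h2⟩ := h
  obtain ⟨h1', h2'⟩ := h'
  refine ⟨h1.trans h1', fun l hl => ?_⟩
  by_cases hpq : p.2 l = q.2 l
  · have hw := h2' l (by rw [← hpq]; exact hl)
    rw [h1]
    exact hw
  · exact h2 l hpq

lemma quot_mk_eq_of_Srel {J : ℕ → ℕ} {n : ℕ} :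
    ∀ (p q : I01 × (Fin n → Bool)), Srel J n p q →
      Quot.mk (graphRel J n) p = Quot.mk (graphRel J n) q := by
  suffices H : ∀ (k : ℕ) (p q : I01 × (Fin n → Bool)),
      (Finset.univ.filter (fun l => p.2 l ≠ q.2 l)).card = k → Srel J n p q →
      Quot.mk (graphRel J n) p = Quot.mk (graphRel J n) q by
    intro p q h
    exact H _ p q rfl h
  intro k
  induction k with
  | zero =>
    intro p q hcard hS
    have : p = q := by
      have hall : ∀ l, p.2 l = q.2 l := by
        intro l
        by_contra hl
        have : l ∈ Finset.univ.filter (fun l => p.2 l ≠ q.2 l) := by simp [hl]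
        rw [Finset.card_eq_zero] at hcard
        simp [hcard] at this
      exact Prod.ext hS.1 (funext hall)
    rw [this]
  | succ k ih =>
    intro p q hcard hS
    have hne : (Finset.univ.filter (fun l => p.2 l ≠ q.2 l)).Nonempty := by
      rw [← Finset.card_pos, hcard]; omega
    obtain ⟨l, hl⟩ := hne
    rw [Finset.mem_filter] at hl
    have hldiff : p.2 l ≠ q.2 l := hl.2
    set p' : I01 × (Fin n → Bool) := (p.1, Function.update p.2 l (q.2 l)) with hp'
    have hrel : graphRel J n p p' := by
      refine ⟨rfl, l, hS.2 l hldiff, ?_, ?_⟩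
      · simpa [hp', Function.update_self] using hldiff
      · intro i hi
        simp [hp', Function.update_of_ne hi]
    have hS' : Srel J n p' q := by
      refine ⟨hS.1, fun i hi => ?_⟩
      by_cases h : i = l
      · subst h
        simp [hp', Function.update_self] at hi
      · simp only [hp', Function.update_of_ne h] at hi
        exact hS.2 i hi
    have hcard' : (Finset.univ.filter (fun i => p'.2 i ≠ q.2 i)).card = k := by
      have : Finset.univ.filter (fun i => p'.2 i ≠ q.2 i) =
          (Finset.univ.filter (fun i => p.2 i ≠ q.2 i)).erase l := by
        ext i
        by_cases h : i = l <;>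
          simp [hp', Finset.mem_erase, h, Function.update_of_ne, Function.update_self]
      rw [this, Finset.card_erase_of_mem (by simp [hldiff]), hcard]
      omega
    exact (Quot.sound hrel).trans (ih p' q hcard' hS')

lemma Srel_of_quot_mk_eq {J : ℕ → ℕ} {n : ℕ} {p q : I01 × (Fin n → Bool)}
    (h : Quot.mk (graphRel J n) p = Quot.mk (graphRel J n) q) : Srel J n p q := by
  have hE := Quot.eqvGen_exact h
  clear h
  induction hE with
  | rel a b hab =>
    obtain ⟨h1, l, hw, hd, hrest⟩ := hab
    exact ⟨h1, fun i hi => by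
      by_cases h : i = l
      · exact h ▸ hw
      · exact absurd (hrest i h) hi⟩
  | refl a => exact Srel.refl J n a
  | symm a b _ ih => exact ih.symm
  | trans a b c _ _ ih1 ih2 => exact ih1.trans ih2

lemma quot_mk_eq_iff_Srel {J : ℕ → ℕ} {n : ℕ} (p q : I01 × (Fin n → Bool)) :
    Quot.mk (graphRel J n) p = Quot.mk (graphRel J n) q ↔ Srel J n p q :=
  ⟨Srel_of_quot_mk_eq, quot_mk_eq_of_Srel p q⟩

lemma isClosed_Srel (J : ℕ → ℕ) (j : ℕ) (hJ : ∀ i, J i = j ∨ J i = j + 1) (n : ℕ) :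
    IsClosed {z : (I01 × (Fin n → Bool)) × (I01 × (Fin n → Bool)) | Srel J n z.1 z.2} := by
  have hW : ∀ l : ℕ, IsClosed {x : ℝ | IsWormhole J l x} :=
    fun l => (wormhole_finite J j hJ l).isClosed
  have heq : {z : (I01 × (Fin n → Bool)) × (I01 × (Fin n → Bool)) | Srel J n z.1 z.2} =
      {z : (I01 × (Fin n → Bool)) × (I01 × (Fin n → Bool)) | z.1.1 = z.2.1} ∩
      ⋂ l : Fin n, ({z : (I01 × (Fin n → Bool)) × (I01 × (Fin n → Bool)) | z.1.2 l = z.2.2 l} ∪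
        {z : (I01 × (Fin n → Bool)) × (I01 × (Fin n → Bool)) | IsWormhole J (l.1 + 1) (z.1.1 : ℝ)}) := by
    ext z
    simp only [Srel, Set.mem_setOf_eq, Set.mem_inter_iff, Set.mem_iInter, Set.mem_union,
      or_iff_not_imp_left]
  rw [heq]
  refine IsClosed.inter (isClosed_eq continuous_fst.fst continuous_snd.fst) ?_
  refine isClosed_iInter fun l => IsClosed.union ?_ ?_
  · exact isClosed_eq ((continuous_apply l).comp continuous_fst.snd)
      ((continuous_apply l).comp continuous_snd.snd)
  · exact (hW (l.1 + 1)).preimage (continuous_subtype_val.comp continuous_fst.fst)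

/-- the map `η : L → lim← F_n`, `η(p) = (Φ̃_n(p))_{n≥0}`, takes values in
the inverse limit and is a homeomorphism of `L` onto `lim← F_n`; in particular `L` is a
compact Hausdorff space. Here `φ_{n+1,n}` and `Φ̃_n` are characterized by their defining
properties on the quotient maps, and the inverse limit is the subspace of `Π_n F_n` of
compatible sequences. -/
theorem stmt5 (t : ℝ) (j : ℕ) (J : ℕ → ℕ)
    (ht : t ∈ Set.Ioo (0 : ℝ) (1 / 2)) (hj : 2 ≤ j)
    (hjt : 1 / ((j : ℝ) + 1) < t ∧ t ≤ 1 / (j : ℝ))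
    (hJ : ∀ i, J i = j ∨ J i = j + 1)
    (φ : ∀ n : ℕ, FGraph J (n + 1) → FGraph J n)
    (hφ : ∀ (n : ℕ) (p : I01 × (Fin (n + 1) → Bool)),
      φ n (Quot.mk (graphRel J (n + 1)) p) = Quot.mk (graphRel J n) (projMap n p))
    (Φ : ∀ n : ℕ, Laakso J → FGraph J n)
    (hΦ : ∀ (n : ℕ) (p : I01 × Kspace),
      Φ n (Quot.mk (laaksoRel J) p) = Quot.mk (graphRel J n) (truncMap n p)) :
    (∃ η : Laakso J ≃ₜ {y : ∀ n : ℕ, FGraph J n // ∀ n : ℕ, φ n (y (n + 1)) = y n},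
      ∀ (p : Laakso J) (n : ℕ), (η p : ∀ n : ℕ, FGraph J n) n = Φ n p) ∧
    CompactSpace (Laakso J) ∧ T2Space (Laakso J) := by
  classical
  have hJ2 : ∀ i, 2 ≤ J i := fun i => by rcases hJ i with h | h <;> omega
  -- Hausdorffness of each approximating graph
  haveI hT2 : ∀ n : ℕ, T2Space (FGraph J n) := fun n =>
    t2_of_quot (graphRel J n) (Srel J n) quot_mk_eq_iff_Srel (isClosed_Srel J j hJ n)
  -- Compactness of the Laakso space
  have hcomp : CompactSpace (Laakso J) := by
    constructor
    have h1 : IsCompact (Set.range (Quot.mk (laaksoRel J))) := isCompact_range continuous_quot_mk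
    rwa [Function.Surjective.range_eq Quot.mk_surjective] at h1
  -- the candidate map into the inverse limit
  have compat : ∀ p : Laakso J, ∀ n : ℕ, φ n (Φ (n + 1) p) = Φ n p := by
    intro p n
    induction p using Quot.ind with
    | _ q =>
      rw [hΦ, hΦ, hφ]
      congr 1
  let toFun : Laakso J → {y : ∀ n : ℕ, FGraph J n // ∀ n : ℕ, φ n (y (n + 1)) = y n} :=
    fun p => ⟨fun n => Φ n p, compat p⟩
  -- injectivity
  have hinj : Function.Injective toFun := by
    intro u v huv
    have hΦeq : ∀ n, Φ n u = Φ n v := fun n => congrFun (congrArg Subtype.val huv) n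
    obtain ⟨a, rfl⟩ := Quot.exists_rep u
    obtain ⟨b, rfl⟩ := Quot.exists_rep v
    have hS : ∀ n, Srel J n (truncMap n a) (truncMap n b) := by
      intro n
      apply Srel_of_quot_mk_eq
      rw [← hΦ, ← hΦ]
      exact hΦeq n
    have hx : a.1 = b.1 := (hS 0).1
    have hw : ∀ l : ℕ, a.2 l ≠ b.2 l → IsWormhole J (l + 1) (a.1 : ℝ) := by
      intro l hl
      exact (hS (l + 1)).2 ⟨l, Nat.lt_succ_self l⟩ hl
    by_cases hab : ∀ i : ℕ, a.2 i = b.2 i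
    · congr 1
      exact Prod.ext hx (funext hab)
    · push_neg at hab
      obtain ⟨l0, hl0⟩ := hab
      apply Quot.sound
      refine ⟨hx, l0, hw l0 hl0, hl0, fun i hi => ?_⟩
      by_contra hne
      exact hi (Nat.succ_injective
        (wormhole_level_unique J hJ2 (hw i hne) (hw l0 hl0)))
  -- surjectivity
  have hsurj : Function.Surjective toFun := by
    rintro ⟨y, hy⟩
    choose p hp using fun n => Quot.exists_rep (y n)
    have chain : ∀ n m (h : m ≤ n),
        Srel J m ((p n).1, fun i : Fin m => (p n).2 (Fin.castLE h i)) (p m) := by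
      intro n
      induction n with
      | zero =>
        intro m h
        have hm0 : m = 0 := Nat.le_zero.1 h
        subst hm0
        exact ⟨rfl, fun l => l.elim0⟩
      | succ n ih =>
        intro m h
        have hSn : Srel J n (projMap n (p (n + 1))) (p n) := by
          apply Srel_of_quot_mk_eq
          rw [← hφ, hp, hp]
          exact hy n
        by_cases hm : m = n + 1
        · subst hm
          refine ⟨rfl, fun l hl => ?_⟩
          exact absurd (congrArg (p (n + 1)).2 (Fin.ext rfl : Fin.castLE h l = l)) hl
        · have hmn : m ≤ n := by omega
          have step : Srel J m ((p (n + 1)).1, fun i : Fin m => (p (n + 1)).2 (Fin.castLE h i))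
              ((p n).1, fun i : Fin m => (p n).2 (Fin.castLE hmn i)) := by
            refine ⟨hSn.1, fun l hl => ?_⟩
            have hd : (projMap n (p (n + 1))).2 (Fin.castLE hmn l) ≠ (p n).2 (Fin.castLE hmn l) := by
              intro he
              apply hl
              have harg : (Fin.castLE hmn l).castSucc = Fin.castLE h l := Fin.ext rfl
              calc (p (n + 1)).2 (Fin.castLE h l)
                  = (p (n + 1)).2 (Fin.castLE hmn l).castSucc := by rw [harg]
                _ = (p n).2 (Fin.castLE hmn l) := he
            exact hSn.2 (Fin.castLE hmn l) hd
          exact step.trans (ih m hmn)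
    set x : I01 := (p 0).1 with hxdef
    set w : Kspace := fun l => (p (l + 1)).2 ⟨l, Nat.lt_succ_self l⟩ with hwdef
    have hfst : ∀ n, (p n).1 = x := fun n => (chain n 0 (Nat.zero_le n)).1
    have key : ∀ n, Quot.mk (graphRel J n) (truncMap n (x, w)) = y n := by
      intro n
      rw [← hp n]
      apply quot_mk_eq_of_Srel
      refine ⟨(hfst n).symm, fun l hl => ?_⟩
      have hc := chain n (l.1 + 1) (Nat.succ_le_of_lt l.2)
      have harg : Fin.castLE (Nat.succ_le_of_lt l.2) (⟨l.1, Nat.lt_succ_self l.1⟩ : Fin (l.1 + 1)) = l :=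
        Fin.ext rfl
      have hd : (p n).2 (Fin.castLE (Nat.succ_le_of_lt l.2) ⟨l.1, Nat.lt_succ_self l.1⟩)
          ≠ (p (l.1 + 1)).2 ⟨l.1, Nat.lt_succ_self l.1⟩ := by
        rw [harg]
        exact fun he => hl (he ▸ rfl)
      have hwm := hc.2 ⟨l.1, Nat.lt_succ_self l.1⟩ hd
      simpa [hfst n, truncMap] using hwm
    refine ⟨Quot.mk (laaksoRel J) (x, w), ?_⟩
    apply Subtype.ext
    funext n
    show Φ n (Quot.mk (laaksoRel J) (x, w)) = y n
    rw [hΦ]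
    exact key n
  -- continuity
  have hcont : Continuous toFun := by
    apply Continuous.subtype_mk
    apply continuous_pi
    intro n
    have hΦc : Continuous (Φ n) := by
      refine isQuotientMap_quot_mk.continuous_iff.2 ?_
      have : (Φ n) ∘ Quot.mk (laaksoRel J) = fun q => Quot.mk (graphRel J n) (truncMap n q) :=
        funext (hΦ n)
      erw [this]
      exact continuous_quot_mk.comp (continuous_fst.prodMk
        (continuous_pi fun i => (continuous_apply (i : ℕ)).comp continuous_snd))
    exact hΦc
  haveI := hcomp
  let E : Laakso J ≃ {y : ∀ n : ℕ, FGraph J n // ∀ n : ℕ, φ n (y (n + 1)) = y n} :=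
    Equiv.ofBijective toFun ⟨hinj, hsurj⟩
  have hEc : Continuous E := hcont
  let η := Continuous.homeoOfEquivCompactToT2 (f := E) hEc
  exact ⟨⟨η, fun p n => rfl⟩, hcomp, η.symm.t2Space⟩
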